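/- If M ⊆ ℂ[A] is an irreducible G-subrepresentation spanned by a set Φ of characters of A, then the subspace of H-fixed vectors of M is spanned by the single element Σ_{χ∈Φ} χ. -/

import Mathlib

noncomputable section

variable {A : Type*} [CommGroup A] [Fintype A]

/-- The semidirect product `G = A ⋊ H`, for `H` a subgroup of `Aut(A)`. -/
abbrev Gsd (H : Subgroup (MulAut A)) : Type _ := A ⋊[H.subtype] H

/-- The `G`-representation on `ℂ[A] = (A → ℂ)`: `a₀ ∈ A` acts by `(a₀·f)(x) = f(x·a₀)` and
`h ∈ H` acts by `(h·f)(x) = f(h⁻¹ x)`. -/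
def rho (H : Subgroup (MulAut A)) (g : Gsd H) : (A → ℂ) →ₗ[ℂ] (A → ℂ) where
  toFun f := fun x => f (((g.right : MulAut A))⁻¹ (x * g.left))
  map_add' _ _ := rfl
  map_smul' _ _ := rfl

/-- `M` is a `G`-subrepresentation of `ℂ[A]`. -/
def IsSubrep (H : Subgroup (MulAut A)) (M : Submodule ℂ (A → ℂ)) : Prop :=
  ∀ (g : Gsd H) (f : A → ℂ), f ∈ M → rho H g f ∈ M

/-- `M` is an irreducible `G`-subrepresentation of `ℂ[A]`. -/
def IsIrred (H : Subgroup (MulAut A)) (M : Submodule ℂ (A → ℂ)) : Prop :=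
  M ≠ ⊥ ∧ ∀ N : Submodule ℂ (A → ℂ), N ≤ M → IsSubrep H N → N = ⊥ ∨ N = M

/-- A character `χ : A →* ℂ` regarded as an element of `ℂ[A] = (A → ℂ)`. -/
def charFun (χ : A →* ℂ) : A → ℂ := fun a => χ a

/-- The subspace of `H`-fixed vectors of `M`. -/
def fixedH (H : Subgroup (MulAut A)) (M : Submodule ℂ (A → ℂ)) :
    Submodule ℂ (A → ℂ) where
  carrier := {f | f ∈ M ∧ ∀ h : H, rho H (SemidirectProduct.inr h) f = f}
  add_mem' := by
    rintro f g ⟨hf, hf2⟩ ⟨hg, hg2⟩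
    exact ⟨M.add_mem hf hg, fun h => by rw [map_add, hf2 h, hg2 h]⟩
  zero_mem' := ⟨M.zero_mem, fun _ => map_zero _⟩
  smul_mem' := by
    rintro c f ⟨hf, hf2⟩
    exact ⟨M.smul_mem c hf, fun h => by rw [map_smul, hf2 h]⟩

/- Auxiliary lemmas -/
section Aux
set_option linter.unusedSectionVars false

lemma charFun_li : LinearIndependent ℂ (charFun (A := A)) :=
  linearIndependent_monoidHom A ℂ

lemma charFun_inj : Function.Injective (charFun (A := A)) :=
  charFun_li.injective

lemma charFun_ne_zero (χ : A →* ℂ) : charFun χ ≠ 0 := fun h => by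
  have := congrFun h 1
  simp [charFun] at this

lemma char_mem_of_mem_span {S : Set (A →* ℂ)} {ψ : A →* ℂ}
    (h : charFun ψ ∈ Submodule.span ℂ (charFun '' S)) : ψ ∈ S := by
  by_contra hψ
  exact charFun_li.notMem_span_image hψ h

/-- The action of `H` on characters. -/
def sig (H : Subgroup (MulAut A)) (h : H) (χ : A →* ℂ) : A →* ℂ :=
  χ.comp (((h⁻¹ : H) : MulAut A) : A →* A)

lemma sig_apply (H : Subgroup (MulAut A)) (h : H) (χ : A →* ℂ) (a : A) :
    sig H h χ a = χ (((h : MulAut A))⁻¹ a) := by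
  simp [sig]

lemma sig_one (H : Subgroup (MulAut A)) (χ : A →* ℂ) : sig H 1 χ = χ := by
  ext a; simp [sig_apply]

lemma sig_mul (H : Subgroup (MulAut A)) (h₁ h₂ : H) (χ : A →* ℂ) :
    sig H (h₁ * h₂) χ = sig H h₁ (sig H h₂ χ) := by
  ext a; simp [sig_apply]

lemma sig_inv_sig (H : Subgroup (MulAut A)) (h : H) (χ : A →* ℂ) :
    sig H h⁻¹ (sig H h χ) = χ := by
  rw [← sig_mul, inv_mul_cancel, sig_one]

lemma sig_sig_inv (H : Subgroup (MulAut A)) (h : H) (χ : A →* ℂ) :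
    sig H h (sig H h⁻¹ χ) = χ := by
  rw [← sig_mul, mul_inv_cancel, sig_one]

lemma rho_char (H : Subgroup (MulAut A)) (g : Gsd H) (χ : A →* ℂ) :
    rho H g (charFun χ) = (χ (((g.right : MulAut A))⁻¹ g.left)) • charFun (sig H g.right χ) := by
  funext x
  simp [rho, charFun, sig_apply, map_mul, mul_comm]

lemma rho_inr_char (H : Subgroup (MulAut A)) (h : H) (χ : A →* ℂ) :
    rho H (SemidirectProduct.inr h) (charFun χ) = charFun (sig H h χ) := by
  rw [rho_char]
  simp

end Aux

/-- If `M ⊆ ℂ[A]` is an irreducible `G`-subrepresentation spanned by a set `Φ` of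
characters of `A`, then the subspace of `H`-fixed vectors of `M` is spanned by the single
element `Σ_{χ∈Φ} χ`. -/
theorem statement_1 (H : Subgroup (MulAut A)) (Φ : Finset (A →* ℂ))
    (M : Submodule ℂ (A → ℂ)) (hMdef : M = Submodule.span ℂ (charFun '' ↑Φ))
    (hM : IsSubrep H M) (hMirr : IsIrred H M) :
    fixedH H M = Submodule.span ℂ {∑ χ ∈ Φ, charFun χ} := by
  classical
  rcases Φ.eq_empty_or_nonempty with rfl | ⟨χ₀, hχ₀⟩
  · exact absurd (by rw [hMdef]; simp) hMirr.1
  have hmemM : ∀ χ ∈ Φ, charFun χ ∈ M := by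
    intro χ hχ
    rw [hMdef]
    exact Submodule.subset_span ⟨χ, hχ, rfl⟩
  have stab : ∀ χ ∈ Φ, ∀ h : H, sig H h χ ∈ Φ := by
    intro χ hχ h
    have h1 := hM (SemidirectProduct.inr h) (charFun χ) (hmemM χ hχ)
    rw [rho_inr_char, hMdef] at h1
    exact_mod_cast char_mem_of_mem_span h1
  -- the orbit of χ₀
  set O : Set (A →* ℂ) := {ψ | ψ ∈ Φ ∧ ∃ h : H, sig H h χ₀ = ψ} with hO
  set N : Submodule ℂ (A → ℂ) := Submodule.span ℂ (charFun '' O) with hN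
  have hNM : N ≤ M := by
    rw [hMdef, hN]
    exact Submodule.span_mono (Set.image_mono fun ψ hψ => hψ.1)
  have hNsub : IsSubrep H N := by
    intro g f hf
    induction hf using Submodule.span_induction with
    | mem x hx =>
      obtain ⟨ψ, ⟨hψΦ, h₁, rfl⟩, rfl⟩ := hx
      rw [rho_char]
      exact N.smul_mem _ (Submodule.subset_span
        ⟨sig H g.right (sig H h₁ χ₀),
          ⟨stab _ hψΦ _, g.right * h₁, (sig_mul H g.right h₁ χ₀).symm⟩, rfl⟩)
    | zero => simp
    | add x y _ _ hx hy => rw [map_add]; exact N.add_mem hx hy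
    | smul c x _ hx => rw [map_smul]; exact N.smul_mem c hx
  have hχ₀O : χ₀ ∈ O := ⟨hχ₀, 1, sig_one H χ₀⟩
  have hNne : N ≠ ⊥ := by
    intro hbot
    have h2 : charFun χ₀ ∈ N := Submodule.subset_span ⟨χ₀, hχ₀O, rfl⟩
    rw [hbot, Submodule.mem_bot] at h2
    exact charFun_ne_zero χ₀ h2
  have hNeq : N = M := (hMirr.2 N hNM hNsub).resolve_left hNne
  have htrans : ∀ χ ∈ Φ, ∃ h : H, sig H h χ₀ = χ := by
    intro χ hχ
    have h1 : charFun χ ∈ N := by rw [hNeq]; exact hmemM χ hχ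
    rw [hN] at h1
    exact (char_mem_of_mem_span h1).2
  -- coefficients
  have exists_c : ∀ f ∈ M, ∃ c : (A →* ℂ) → ℂ, f = ∑ χ ∈ Φ, c χ • charFun χ := by
    intro f hf
    rw [hMdef, ← Finset.coe_image, Submodule.mem_span_finset] at hf
    obtain ⟨g, -, hg⟩ := hf
    refine ⟨fun χ => g (charFun χ), ?_⟩
    rw [← hg, Finset.sum_image (fun x _ y _ h => charFun_inj h)]
  have uniq : ∀ c : (A →* ℂ) → ℂ, ∑ χ ∈ Φ, c χ • charFun χ = 0 → ∀ χ ∈ Φ, c χ = 0 :=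
    fun c hc => linearIndependent_iff'.mp charFun_li Φ c hc
  have reindex : ∀ (c : (A →* ℂ) → ℂ) (h : H),
      ∑ χ ∈ Φ, c χ • charFun (sig H h χ) = ∑ χ ∈ Φ, c (sig H h⁻¹ χ) • charFun χ := by
    intro c h
    refine Finset.sum_nbij' (fun χ => sig H h χ) (fun χ => sig H h⁻¹ χ)
      (fun χ hχ => stab _ hχ _) (fun χ hχ => stab _ hχ _)
      (fun χ _ => sig_inv_sig H h χ) (fun χ _ => sig_sig_inv H h χ) ?_
    intro χ _
    rw [sig_inv_sig]
  set s := ∑ χ ∈ Φ, charFun χ with hs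
  have hsM : s ∈ M := Submodule.sum_mem _ fun χ hχ => hmemM χ hχ
  have hsfix : ∀ h : H, rho H (SemidirectProduct.inr h) s = s := by
    intro h
    rw [hs, map_sum]
    simp_rw [rho_inr_char]
    have h1 := reindex (fun _ => 1) h
    simpa using h1
  apply le_antisymm
  · rintro f ⟨hfM, hffix⟩
    obtain ⟨c, hc⟩ := exists_c f hfM
    have hconst : ∀ χ ∈ Φ, c χ = c χ₀ := by
      intro χ hχ
      obtain ⟨h, rfl⟩ := htrans χ hχ
      have h1 := hffix h
      rw [hc, map_sum] at h1
      simp_rw [map_smul, rho_inr_char] at h1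
      rw [reindex c h] at h1
      have h2 : ∑ ψ ∈ Φ, (c (sig H h⁻¹ ψ) - c ψ) • charFun ψ = 0 := by
        simp_rw [sub_smul, Finset.sum_sub_distrib, h1, sub_self]
      have h3 := uniq _ h2 (sig H h χ₀) hχ
      rw [sig_inv_sig] at h3
      exact (sub_eq_zero.mp h3).symm
    have h4 : f = c χ₀ • s := by
      rw [hc, hs, Finset.smul_sum]
      exact Finset.sum_congr rfl fun χ hχ => by rw [hconst χ hχ]
    rw [h4]
    exact Submodule.smul_mem _ _ (Submodule.mem_span_singleton_self s)
  · rw [Submodule.span_le, Set.singleton_subset_iff]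
    exact ⟨hsM, hsfix⟩
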